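/- Let g : I → ℝ be differentiable on an interval I ⊂ (0,∞), κ ≠ 0, f₀, and suppose g satisfies u(1+u)g'(u) + (1-κ)g(u) + f₀·(u/(1+u))^κ = 0 on I. Then there is a constant g₀ with g(u) = (g₀ - f₀·u/(1+u))·(u/(1+u))^{κ-1} for all u ∈ I. -/

import Mathlib

/-- if g satisfies u(1+u)g'(u) + (1−κ)g(u) + f₀(u/(1+u))^κ = 0 on
an interval I ⊂ (0,∞) with κ ≠ 0, then
g(u) = (g₀ − f₀·u/(1+u))·(u/(1+u))^{κ−1} for some constant g₀. -/
theorem stmt16 (g : ℝ → ℝ) (a b κ f₀ : ℝ) (hκ : κ ≠ 0) (hI : Set.Ioo a b ⊆ Set.Ioi 0)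
    (hgd : ∀ u ∈ Set.Ioo a b, DifferentiableAt ℝ g u)
    (hODE : ∀ u ∈ Set.Ioo a b,
      u * (1 + u) * deriv g u + (1 - κ) * g u + f₀ * (u / (1 + u)) ^ κ = 0) :
    ∃ g₀ : ℝ, ∀ u ∈ Set.Ioo a b,
      g u = (g₀ - f₀ * (u / (1 + u))) * (u / (1 + u)) ^ (κ - 1) := by
  set F : ℝ → ℝ := fun u => g u * (u / (1 + u)) ^ (1 - κ) + f₀ * (u / (1 + u)) with hF
  have hFder : ∀ u ∈ Set.Ioo a b, HasDerivAt F 0 u := by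
    intro u hu
    have hu0 : (0:ℝ) < u := hI hu
    have h1u : (0:ℝ) < 1 + u := by linarith
    have ht : (0:ℝ) < u / (1 + u) := div_pos hu0 h1u
    have ht' : HasDerivAt (fun u : ℝ => u / (1 + u))
        ((1 * (1 + u) - u * 1) / (1 + u) ^ 2) u :=
      (hasDerivAt_id u).div ((hasDerivAt_id u).const_add 1) h1u.ne'
    have hrp : HasDerivAt (fun u : ℝ => (u / (1 + u)) ^ (1 - κ))
        ((1 * (1 + u) - u * 1) / (1 + u) ^ 2 * (1 - κ) * (u / (1 + u)) ^ (1 - κ - 1)) u :=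
      ht'.rpow_const (Or.inl ht.ne')
    have hg : HasDerivAt g (deriv g u) u := (hgd u hu).hasDerivAt
    have hFd : HasDerivAt F
        (deriv g u * (u / (1 + u)) ^ (1 - κ) +
          g u * ((1 * (1 + u) - u * 1) / (1 + u) ^ 2 * (1 - κ) * (u / (1 + u)) ^ (1 - κ - 1)) +
          f₀ * ((1 * (1 + u) - u * 1) / (1 + u) ^ 2)) u :=
      (hg.mul hrp).add (ht'.const_mul f₀)
    convert hFd using 1
    have hO := hODE u hu
    -- rpow identities
    have e1 : (u / (1 + u)) ^ (1 - κ) = (u / (1 + u)) * (u / (1 + u)) ^ (-κ) := by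
      rw [show (1 - κ) = 1 + (-κ) by ring, Real.rpow_add ht, Real.rpow_one]
    have e2 : (u / (1 + u)) ^ (1 - κ - 1) = (u / (1 + u)) ^ (-κ) := by ring_nf
    have e3 : (u / (1 + u)) ^ κ * (u / (1 + u)) ^ (-κ) = 1 := by
      rw [← Real.rpow_add ht]; simp
    set A := (u / (1 + u)) ^ κ with hA
    set C := (u / (1 + u)) ^ (-κ) with hC
    rw [e1, e2]
    have hgu : deriv g u = -((1 - κ) * g u + f₀ * A) / (u * (1 + u)) := by
      field_simp
      linarith [hO]
    rw [hgu]
    field_simp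
    linear_combination f₀ * e3
  rcases Set.eq_empty_or_nonempty (Set.Ioo a b) with he | ⟨x, hx⟩
  · exact ⟨0, by simp [he]⟩
  · refine ⟨F x, fun u hu => ?_⟩
    have hu0 : (0:ℝ) < u := hI hu
    have h1u : (0:ℝ) < 1 + u := by linarith
    have ht : (0:ℝ) < u / (1 + u) := div_pos hu0 h1u
    have hconst : F u = F x := by
      apply Convex.is_const_of_fderivWithin_eq_zero (convex_Ioo a b)
        (fun y hy => ((hFder y hy).differentiableAt).differentiableWithinAt)
        (fun y hy => ?_) hu hx
      rw [fderivWithin_of_isOpen isOpen_Ioo hy, (hFder y hy).hasFDerivAt.fderiv]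
      ext z; simp
    have hne : (u / (1 + u)) ^ (1 - κ) ≠ 0 := (Real.rpow_pos_of_pos ht _).ne'
    have e4 : (u / (1 + u)) ^ (κ - 1) = ((u / (1 + u)) ^ (1 - κ))⁻¹ := by
      rw [show (κ - 1) = -(1 - κ) by ring, Real.rpow_neg ht.le]
    have : g u * (u / (1 + u)) ^ (1 - κ) = F x - f₀ * (u / (1 + u)) := by
      rw [← hconst]; simp only [hF]; ring
    rw [e4, ← this, mul_inv_cancel_right₀ hne]
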